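/- Fix an integer n ≥ 1, a real number P ∈ (0,1), and a real number c > 0, and set D = 1 − (c/n)·ln(1−P) (note D > 0). Let γ : ℕ → ℝ be a sequence with γ_m > 0 for all m and γ_m/m → c as m → ∞. Then lim_{m→∞} T(m, γ_m, P) = (−1)^n·(1−P)·D^{−n} − (−1)^n·(1−P)^{(n−1)/n}·e^{1/c}·Σ_{ℓ=0}^{n−1} ((−1)^ℓ/(ℓ!·c^ℓ))·D^{−(n−ℓ)}. -/

import Mathlib

open Filter

lemma binom_one (x : ℝ) (N : ℕ) :
    ∑ j ∈ Finset.range (N+1), (N.choose j : ℝ) * (1-x)^j * x^(N-j) = 1 := by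
  have h := add_pow (1-x) x N
  simp only [sub_add_cancel, one_pow] at h
  rw [Finset.sum_congr rfl (fun j _ => by ring :
    ∀ j ∈ Finset.range (N+1), (N.choose j : ℝ) * (1-x)^j * x^(N-j)
      = (1-x)^j * x^(N-j) * (N.choose j)), ← h]

lemma step_term (x : ℝ) (N i : ℕ) (hi : i + 1 ≤ N) :
    ((N.choose (i+1)) : ℝ)*(1-x)^(i+1)*x^(N-(i+1))
      - (((N+1).choose (i+1)) : ℝ)*(1-x)^(i+1)*x^(N+1-(i+1))
    = (1-x)^(i+1+1) * (N.choose (i+1)) * x^(N-(i+1))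
      - (1-x)^(i+0+1) * (N.choose i) * x^(N-i) := by
  have h1 : N + 1 - (i+1) = N - i := by omega
  have h2 : N - i = (N - (i+1)) + 1 := by omega
  rw [Nat.choose_succ_succ' N i]
  push_cast
  rw [h2, pow_succ]
  ring

lemma key_ident (x : ℝ) (s : ℕ) : ∀ M : ℕ,
    (1-x)^(s+1) * ∑ k ∈ Finset.range (M+1), ((s+k).choose k : ℝ) * x^k
      = 1 - ∑ j ∈ Finset.range (s+1), ((M+s+1).choose j : ℝ) * (1-x)^j * x^(M+s+1-j)
  | 0 => by
      have hb := binom_one x (s+1)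
      rw [Finset.sum_range_succ] at hb
      simp only [Nat.choose_self, Nat.cast_one, one_mul, Nat.sub_self, pow_zero, mul_one] at hb
      simp only [Finset.sum_range_one, Nat.add_zero, Nat.choose_zero_right, Nat.cast_one,
        pow_zero, mul_one, Nat.zero_add]
      linarith
  | (M+1) => by
      have ih := key_ident x s M
      rw [Finset.sum_range_succ, mul_add, ih]
      set N := M + s + 1 with hN
      have hrw : ∀ j, (M+1) + s + 1 - j = N + 1 - j := fun j => by omega
      have hrw2 : (M+1) + s + 1 = N + 1 := by omega
      have key : (∑ j ∈ Finset.range (s+1), (N.choose j : ℝ) * (1-x)^j * x^(N-j))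
          - (∑ j ∈ Finset.range (s+1), ((N+1).choose j : ℝ) * (1-x)^j * x^(N+1-j))
          = (1-x)^(s+1) * ((s+(M+1)).choose (M+1) : ℝ) * x^(M+1) := by
        rw [← Finset.sum_sub_distrib, Finset.sum_range_succ']
        have hterm : ∀ i ∈ Finset.range s,
            ((N.choose (i+1)) : ℝ)*(1-x)^(i+1)*x^(N-(i+1))
              - (((N+1).choose (i+1)) : ℝ)*(1-x)^(i+1)*x^(N+1-(i+1))
            = (fun j => (1-x)^(j+1) * (N.choose j : ℝ) * x^(N-j)) (i+1)
              - (fun j => (1-x)^(j+1) * (N.choose j : ℝ) * x^(N-j)) i := by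
          intro i hi
          simp only [Finset.mem_range] at hi
          have := step_term x N i (by omega)
          simpa using this
        rw [Finset.sum_congr rfl hterm, Finset.sum_range_sub
          (fun j => (1-x)^(j+1) * (N.choose j : ℝ) * x^(N-j))]
        have hNs : N - s = M + 1 := by omega
        have hc : (N.choose s : ℝ) = ((s+(M+1)).choose (M+1) : ℝ) := by
          norm_cast
          rw [show s + (M+1) = N by omega]
          rw [← Nat.choose_symm (show M+1 ≤ N by omega), show N - (M+1) = s by omega]
        simp only [Nat.choose_zero_right, Nat.cast_one, mul_one, one_mul, Nat.sub_zero,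
          pow_zero, Nat.choose_self]
        rw [hNs, hc]
        ring
      simp only [hrw, hrw2]
      linarith [key]

lemma tendsto_exp_ratio (δ : ℕ → ℝ) (hδ : Tendsto δ atTop (nhds 0))
    (hne : ∀ᶠ m in atTop, δ m ≠ 0) :
    Tendsto (fun m => (Real.exp (δ m) - 1) / δ m) atTop (nhds 1) := by
  have h := hasDerivAt_iff_tendsto_slope.mp (Real.hasDerivAt_exp 0)
  rw [Real.exp_zero] at h
  have hδ' : Tendsto δ atTop (nhdsWithin 0 {(0:ℝ)}ᶜ) := by
    rw [tendsto_nhdsWithin_iff]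
    exact ⟨hδ, hne.mono fun m hm => hm⟩
  have := h.comp hδ'
  refine this.congr fun m => ?_
  simp [slope_def_field, Real.exp_zero]

lemma tendsto_log_ratio (r : ℕ → ℝ) (hr : Tendsto r atTop (nhds 1))
    (hne : ∀ᶠ m in atTop, r m ≠ 1) :
    Tendsto (fun m => Real.log (r m) / (r m - 1)) atTop (nhds 1) := by
  have h := hasDerivAt_iff_tendsto_slope.mp (Real.hasDerivAt_log one_ne_zero)
  rw [inv_one] at h
  have hr' : Tendsto r atTop (nhdsWithin 1 {(1:ℝ)}ᶜ) := by
    rw [tendsto_nhdsWithin_iff]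
    exact ⟨hr, hne.mono fun m hm => hm⟩
  have := h.comp hr'
  refine this.congr fun m => ?_
  simp [slope_def_field]

lemma tendsto_pow_exp (r : ℕ → ℝ) (e : ℕ → ℕ) (t : ℝ)
    (hr0 : ∀ᶠ m in atTop, 1 < r m) (hr1 : Tendsto r atTop (nhds 1))
    (h : Tendsto (fun m => (e m : ℝ) * (r m - 1)) atTop (nhds t)) :
    Tendsto (fun m => r m ^ e m) atTop (nhds (Real.exp t)) := by
  have hne : ∀ᶠ m in atTop, r m ≠ 1 := hr0.mono fun m hm => ne_of_gt hm
  have hlogr := tendsto_log_ratio r hr1 hne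
  have hmul := h.mul hlogr
  rw [mul_one] at hmul
  have hlog : Tendsto (fun m => (e m : ℝ) * Real.log (r m)) atTop (nhds t) := by
    refine hmul.congr' ?_
    filter_upwards [hne] with m hm
    have : r m - 1 ≠ 0 := sub_ne_zero.mpr hm
    field_simp
  have := (Real.continuous_exp.tendsto t).comp hlog
  refine this.congr' ?_
  filter_upwards [hr0] with m hm
  have hpos : 0 < r m := lt_trans one_pos hm
  simp only [Function.comp]
  rw [Real.exp_nat_mul, Real.exp_log hpos]


/-- The function `T(m,γ,P)` of Appendix D of the paper. -/
noncomputable def rocT (n m : ℕ) (γ P : ℝ) : ℝ :=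
  ∑ k ∈ Finset.range (m - n),
    ((n + k - 1).factorial : ℝ) / (k.factorial * (n - 1).factorial * γ ^ n) *
      (1 + 1 / γ) ^ k * (1 - P) ^ (((n : ℝ) * ((m : ℝ) - 1) - k) / ((m : ℝ) * n))

/-- Limit of `T` established in Appendix D: as `m → ∞` with `γ_m/m → c > 0`,
`T(m,γ_m,P) → (−1)^n(1−P)D^{−n} − (−1)^n(1−P)^{(n−1)/n}e^{1/c}·
  Σ_{ℓ=0}^{n−1} ((−1)^ℓ/(ℓ!c^ℓ))·D^{−(n−ℓ)}` where `D = 1 − (c/n)·ln(1−P)`. -/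
theorem T_limit (n : ℕ) (hn : 1 ≤ n) (P : ℝ) (hP : P ∈ Set.Ioo (0 : ℝ) 1)
    (c : ℝ) (hc : 0 < c) (D : ℝ) (hD : D = 1 - c / n * Real.log (1 - P))
    (γ : ℕ → ℝ) (hγpos : ∀ m, 0 < γ m)
    (hγ : Tendsto (fun m : ℕ => γ m / m) atTop (nhds c)) :
    Tendsto (fun m : ℕ => rocT n m (γ m) P) atTop
      (nhds ((-1 : ℝ) ^ n * (1 - P) * (D ^ n)⁻¹ -
        (-1 : ℝ) ^ n * (1 - P) ^ (((n : ℝ) - 1) / n) * Real.exp (1 / c) *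
          ∑ ℓ ∈ Finset.range n, ((-1 : ℝ) ^ ℓ / (ℓ.factorial * c ^ ℓ)) * (D ^ (n - ℓ))⁻¹)) := by

  obtain ⟨hP0, hP1⟩ := hP
  set Q : ℝ := 1 - P with hQdef
  have hQ0 : 0 < Q := by rw [hQdef]; linarith
  have hQ1 : Q < 1 := by rw [hQdef]; linarith
  set L : ℝ := Real.log Q with hLdef
  have hL : L < 0 := Real.log_neg hQ0 hQ1
  have hn0 : (0:ℝ) < n := by exact_mod_cast hn
  have hnn : (n:ℝ) ≠ 0 := ne_of_gt hn0
  have hD0 : 0 < D := by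
    have h1 : c / n * L < 0 := mul_neg_of_pos_of_neg (div_pos hc hn0) hL
    rw [hD]; linarith
  set δ : ℕ → ℝ := fun m => -L / ((m:ℝ) * n) with hδdef
  set E : ℕ → ℝ := fun m => Real.exp (δ m) with hEdef
  set r : ℕ → ℝ := fun m => (1 + 1 / γ m) * E m with hrdef
  set u : ℕ → ℝ := fun m => γ m * (1 - r m) with hudef
  have hmtop : Tendsto (fun m : ℕ => (m:ℝ)) atTop atTop := tendsto_natCast_atTop_atTop
  have hγtop : Tendsto γ atTop atTop := by
    refine (hγ.pos_mul_atTop hc hmtop).congr' ?_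
    filter_upwards [eventually_ge_atTop 1] with m hm
    have hm0 : (m:ℝ) ≠ 0 := Nat.cast_ne_zero.mpr (by omega)
    exact div_mul_cancel₀ (γ m) hm0
  have hγinv : Tendsto (fun m => (γ m)⁻¹) atTop (nhds 0) := hγtop.inv_tendsto_atTop
  have hmγ : Tendsto (fun m : ℕ => (m:ℝ) * (γ m)⁻¹) atTop (nhds c⁻¹) := by
    refine (hγ.inv₀ (ne_of_gt hc)).congr' ?_
    filter_upwards [eventually_ge_atTop 1] with m hm
    rw [inv_div, div_eq_mul_inv]
  have hδ0 : Tendsto δ atTop (nhds 0) := by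
    have h1 : Tendsto (fun m : ℕ => (-L/(n:ℝ)) * (1/(m:ℝ))) atTop (nhds ((-L/(n:ℝ)) * 0)) :=
      tendsto_one_div_atTop_nhds_zero_nat.const_mul _
    rw [mul_zero] at h1
    refine h1.congr fun m => ?_
    simp only [hδdef]
    rw [div_mul_div_comm, mul_one, mul_comm ((n:ℝ)) ((m:ℝ))]
  have hδne : ∀ᶠ m in atTop, δ m ≠ 0 := by
    filter_upwards [eventually_ge_atTop 1] with m hm
    have hm0 : (0:ℝ) < m := by exact_mod_cast hm
    have h : 0 < δ m := by
      simp only [hδdef]; exact div_pos (by linarith) (mul_pos hm0 hn0)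
    exact ne_of_gt h
  have hE1 : Tendsto E atTop (nhds 1) := by
    have h := (Real.continuous_exp.tendsto 0).comp hδ0
    rw [Real.exp_zero] at h
    exact h.congr fun m => rfl
  have hmE : Tendsto (fun m : ℕ => (m:ℝ) * (E m - 1)) atTop (nhds (-L/(n:ℝ))) := by
    have h0 := tendsto_exp_ratio δ hδ0 hδne
    have h1 : Tendsto (fun m => (-L/(n:ℝ)) * ((Real.exp (δ m) - 1)/δ m)) atTop
        (nhds ((-L/(n:ℝ)) * 1)) := h0.const_mul _
    rw [mul_one] at h1
    refine h1.congr' ?_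
    filter_upwards [eventually_ge_atTop 1, hδne] with m hm hδm
    have hm0 : (m:ℝ) ≠ 0 := Nat.cast_ne_zero.mpr (by omega)
    have hkey : (-L/(n:ℝ)) = (m:ℝ) * δ m := by
      simp only [hδdef]; field_simp
    rw [hkey]
    simp only [hEdef]
    field_simp
  have hγE : Tendsto (fun m : ℕ => γ m * (E m - 1)) atTop (nhds (c * (-L/(n:ℝ)))) := by
    refine (hγ.mul hmE).congr' ?_
    filter_upwards [eventually_ge_atTop 1] with m hm
    have hm0 : (m:ℝ) ≠ 0 := Nat.cast_ne_zero.mpr (by omega)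
    field_simp
  have hgr : Tendsto (fun m : ℕ => γ m * (r m - 1)) atTop (nhds D) := by
    have h1 := hγE.add hE1
    have h2 : c * (-L/(n:ℝ)) + 1 = D := by rw [hD]; ring
    rw [h2] at h1
    refine h1.congr fun m => ?_
    have hγm : γ m ≠ 0 := ne_of_gt (hγpos m)
    simp only [hrdef]
    field_simp
    ring
  have hu : Tendsto u atTop (nhds (-D)) := by
    refine hgr.neg.congr fun m => ?_
    simp only [hudef]; ring
  have hrgt1 : ∀ m : ℕ, 1 ≤ m → 1 < r m := by
    intro m hm
    have hm0 : (0:ℝ) < m := by exact_mod_cast hm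
    have hδm : 0 < δ m := by
      simp only [hδdef]; exact div_pos (by linarith) (mul_pos hm0 hn0)
    have hE : 1 < E m := by
      simp only [hEdef]; exact Real.one_lt_exp_iff.mpr hδm
    have hγm : 0 < 1 / γ m := one_div_pos.mpr (hγpos m)
    simp only [hrdef]
    nlinarith
  have hr1 : Tendsto r atTop (nhds 1) := by
    have h1 := hgr.mul hγinv
    rw [mul_zero] at h1
    have h2 : Tendsto (fun m : ℕ => 1 + γ m * (r m - 1) * (γ m)⁻¹) atTop (nhds (1 + 0)) :=
      tendsto_const_nhds.add h1
    rw [add_zero] at h2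
    refine h2.congr fun m => ?_
    have hγm : γ m ≠ 0 := ne_of_gt (hγpos m)
    field_simp
    ring
  have hsub : ∀ a : ℕ, Tendsto (fun m : ℕ => ((m - a : ℕ) : ℝ) * (γ m)⁻¹) atTop (nhds c⁻¹) := by
    intro a
    have h1 : Tendsto (fun m : ℕ => (m:ℝ) * (γ m)⁻¹ - (a:ℝ) * (γ m)⁻¹) atTop
        (nhds (c⁻¹ - (a:ℝ) * 0)) := hmγ.sub (hγinv.const_mul _)
    rw [mul_zero, sub_zero] at h1
    refine h1.congr' ?_
    filter_upwards [eventually_ge_atTop a] with m hm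
    rw [Nat.cast_sub hm]
    ring
  have hrm : ∀ j : ℕ, Tendsto (fun m : ℕ => r m ^ (m - 1 - j)) atTop
      (nhds (Real.exp (D/c))) := by
    intro j
    have harg : Tendsto (fun m : ℕ => ((m - 1 - j : ℕ) : ℝ) * (r m - 1)) atTop (nhds (D/c)) := by
      have h1 := (hsub (1 + j)).mul hgr
      have h2 : c⁻¹ * D = D / c := by rw [inv_mul_eq_div]
      rw [h2] at h1
      refine h1.congr fun m => ?_
      have hγm : γ m ≠ 0 := ne_of_gt (hγpos m)
      rw [show m - 1 - j = m - (1 + j) by omega]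
      field_simp
    exact tendsto_pow_exp r (fun m => m - 1 - j) (D/c)
      ((eventually_ge_atTop 1).mono fun m hm => hrgt1 m hm) hr1 harg
  have hchoose : ∀ j : ℕ, Tendsto (fun m : ℕ => (((m-1).choose j : ℕ) : ℝ) * ((γ m)⁻¹)^j)
      atTop (nhds ((j.factorial : ℝ)⁻¹ * (c⁻¹)^j)) := by
    intro j
    have hlim : Tendsto (fun m : ℕ => (j.factorial : ℝ)⁻¹ *
        ∏ i ∈ Finset.range j, (((m - 1 - i : ℕ) : ℝ) * (γ m)⁻¹)) atTop
        (nhds ((j.factorial : ℝ)⁻¹ * ∏ _i ∈ Finset.range j, c⁻¹)) := by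
      refine Tendsto.const_mul _ (tendsto_finset_prod _ fun i _ => ?_)
      refine (hsub (1 + i)).congr fun m => ?_
      rw [show m - (1 + i) = m - 1 - i by omega]
    rw [Finset.prod_const, Finset.card_range] at hlim
    refine hlim.congr fun m => ?_
    have hjf : (j.factorial : ℝ) ≠ 0 := Nat.cast_ne_zero.mpr j.factorial_ne_zero
    have h2 : ((m-1).descFactorial j : ℝ) = (j.factorial : ℝ) * ((m-1).choose j : ℝ) := by
      exact_mod_cast congrArg (Nat.cast : ℕ → ℝ) (Nat.descFactorial_eq_factorial_mul_choose (m-1) j)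
    have h3 : ((m-1).descFactorial j : ℝ) = ∏ i ∈ Finset.range j, ((m - 1 - i : ℕ) : ℝ) := by
      rw [Nat.descFactorial_eq_prod_range]
      exact Nat.cast_prod _ _
    have hcast : (((m-1).choose j : ℕ) : ℝ) =
        (∏ i ∈ Finset.range j, ((m - 1 - i : ℕ) : ℝ)) * (j.factorial : ℝ)⁻¹ := by
      rw [← h3, h2, mul_comm ((j.factorial : ℝ)) _, mul_assoc,
        mul_inv_cancel₀ hjf, mul_one]
    rw [hcast, Finset.prod_mul_distrib, Finset.prod_const, Finset.card_range]
    ring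
  have hun : Tendsto (fun m : ℕ => ((u m)^n)⁻¹) atTop (nhds (((-D)^n)⁻¹)) :=
    (hu.pow n).inv₀ (pow_ne_zero n (neg_ne_zero.mpr (ne_of_gt hD0)))
  have hexp1 : Tendsto (fun m : ℕ => Real.exp (L * (1 - 1/(m:ℝ)))) atTop
      (nhds (Real.exp L)) := by
    have h4 : Tendsto (fun m : ℕ => L * (1 - 1/(m:ℝ))) atTop (nhds (L * (1 - 0))) :=
      (tendsto_const_nhds.sub tendsto_one_div_atTop_nhds_zero_nat).const_mul L
    rw [sub_zero, mul_one] at h4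
    exact (Real.continuous_exp.tendsto _).comp h4
  have hS : Tendsto (fun m : ℕ => ∑ j ∈ Finset.range n,
      (((m-1).choose j : ℕ) : ℝ) * (1 - r m)^j * (r m)^(m - 1 - j)) atTop
      (nhds (∑ j ∈ Finset.range n,
        (j.factorial : ℝ)⁻¹ * (c⁻¹)^j * (-D)^j * Real.exp (D/c))) := by
    refine tendsto_finset_sum _ fun j _ => ?_
    refine (((hchoose j).mul (hu.pow j)).mul (hrm j)).congr fun m => ?_
    have hγm : γ m ≠ 0 := ne_of_gt (hγpos m)
    have h2 : (1 - r m)^j = ((γ m)⁻¹)^j * (u m)^j := by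
      rw [← mul_pow]
      congr 1
      simp only [hudef]
      rw [inv_mul_cancel_left₀ hγm]
    rw [h2]; ring
  have hF1 := hexp1.mul hun
  have hF2 := (hexp1.mul hun).mul hS
  have hmain := hF1.sub hF2
  have hvalue : Real.exp L * ((-D)^n)⁻¹ - Real.exp L * ((-D)^n)⁻¹ *
      (∑ j ∈ Finset.range n, (j.factorial : ℝ)⁻¹ * (c⁻¹)^j * (-D)^j * Real.exp (D/c))
      = (-1 : ℝ) ^ n * Q * (D ^ n)⁻¹ -
        (-1 : ℝ) ^ n * Q ^ (((n : ℝ) - 1) / n) * Real.exp (1 / c) *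
          ∑ ℓ ∈ Finset.range n, ((-1 : ℝ) ^ ℓ / (ℓ.factorial * c ^ ℓ)) * (D ^ (n - ℓ))⁻¹ := by
    have hQL : Real.exp L = Q := Real.exp_log hQ0
    have hinvn : ((-D)^n)⁻¹ = (-1:ℝ)^n * (D^n)⁻¹ := by
      rw [neg_pow, mul_inv, ← inv_pow, inv_neg, inv_one]
    have hexpDc : Real.exp (D/c) = Real.exp (1/c) * Real.exp (-L/(n:ℝ)) := by
      rw [← Real.exp_add]
      congr 1
      rw [hD]
      field_simp
      ring
    have hQpow : Q ^ (((n:ℝ)-1)/(n:ℝ)) = Real.exp L * Real.exp (-L/(n:ℝ)) := by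
      rw [Real.rpow_def_of_pos hQ0, ← hLdef, ← Real.exp_add]
      congr 1
      field_simp
      ring
    rw [Finset.mul_sum, Finset.mul_sum]
    congr 1
    · rw [hQL, hinvn]; ring
    · refine Finset.sum_congr rfl fun j hj => ?_
      have hjn : j < n := Finset.mem_range.mp hj
      have hDn : (D:ℝ)^n ≠ 0 := pow_ne_zero n (ne_of_gt hD0)
      have hDnj : (D^(n-j))⁻¹ = D^j * (D^n)⁻¹ := by
        refine inv_eq_of_mul_eq_one_left ?_
        rw [mul_comm (D^j) _, mul_assoc, ← pow_add, show j + (n - j) = n by omega,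
          inv_mul_cancel₀ hDn]
      rw [hinvn, hDnj, neg_pow D j, hexpDc, hQpow, hQL]
      ring
  rw [hvalue] at hmain
  have heq : (fun m : ℕ => rocT n m (γ m) P) =ᶠ[atTop] fun m : ℕ =>
      Real.exp (L * (1 - 1/(m:ℝ))) * ((u m)^n)⁻¹ -
      Real.exp (L * (1 - 1/(m:ℝ))) * ((u m)^n)⁻¹ *
        (∑ j ∈ Finset.range n,
          (((m-1).choose j : ℕ) : ℝ) * (1 - r m)^j * (r m)^(m - 1 - j)) := by
    filter_upwards [eventually_ge_atTop (n+1)] with m hm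
    have hm1 : 1 ≤ m := by omega
    have hmR : (0:ℝ) < m := by exact_mod_cast hm1
    have hmm : (m:ℝ) ≠ 0 := ne_of_gt hmR
    have hγm : γ m ≠ 0 := ne_of_gt (hγpos m)
    have hr1m : 1 < r m := hrgt1 m hm1
    have h1r : (1 : ℝ) - r m ≠ 0 := ne_of_lt (by linarith)
    have eq1 : ∀ k : ℕ,
        ((n + k - 1).factorial : ℝ) / (k.factorial * (n - 1).factorial * γ m ^ n) *
          (1 + 1 / γ m) ^ k * Q ^ (((n : ℝ) * ((m : ℝ) - 1) - k) / ((m : ℝ) * n))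
        = (Real.exp (L * (1 - 1/(m:ℝ))) * ((γ m)^n)⁻¹) *
            ((((n-1+k).choose k : ℕ):ℝ) * r m ^ k) := by
      intro k
      have hex : ((n : ℝ) * ((m : ℝ) - 1) - (k:ℝ)) / ((m : ℝ) * (n:ℝ)) =
          (1 - 1/(m:ℝ)) + (k:ℝ) * (-1/((m:ℝ)*(n:ℝ))) := by
        field_simp
        ring
      rw [Real.rpow_def_of_pos hQ0, ← hLdef, hex, mul_add, Real.exp_add]
      have h3 : Real.exp (L * ((k:ℝ) * (-1/((m:ℝ)*(n:ℝ))))) = E m ^ k := by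
        rw [show L * ((k:ℝ) * (-1/((m:ℝ)*(n:ℝ)))) = (k:ℝ) * (-L/((m:ℝ)*(n:ℝ))) by ring,
          Real.exp_nat_mul]
      rw [h3]
      have hcoef : ((n + k - 1).factorial : ℝ) / ((k.factorial:ℝ) * ((n - 1).factorial:ℝ)
          * γ m ^ n) = (((n-1+k).choose k : ℕ):ℝ) * ((γ m)^n)⁻¹ := by
        rw [Nat.cast_choose ℝ (Nat.le_add_left k (n-1)), Nat.add_sub_cancel,
          show n + k - 1 = n - 1 + k by omega]
        rw [← div_div, div_eq_mul_inv]
      rw [hcoef]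
      simp only [hrdef]
      rw [mul_pow]
      ring
    unfold rocT
    rw [← hQdef]
    rw [Finset.sum_congr rfl fun k _ => eq1 k, ← Finset.mul_sum]
    have hkey := key_ident (r m) (n-1) (m-n-1)
    rw [show n - 1 + 1 = n by omega, show m - n - 1 + 1 = m - n by omega,
      show m - n - 1 + (n-1) + 1 = m - 1 by omega] at hkey
    have hSig : ∑ k ∈ Finset.range (m-n), (((n-1+k).choose k : ℕ):ℝ) * r m ^ k
        = ((1 - r m)^n)⁻¹ * (1 - ∑ j ∈ Finset.range n,
            (((m-1).choose j : ℕ) : ℝ) * (1 - r m)^j * (r m)^(m - 1 - j)) := by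
      rw [← hkey, inv_mul_cancel_left₀ (pow_ne_zero n h1r)]
    rw [hSig]
    have husplit : ((u m) ^ n)⁻¹ = ((γ m) ^ n)⁻¹ * ((1 - r m)^n)⁻¹ := by
      simp only [hudef]
      rw [mul_pow, mul_inv]
    rw [husplit]
    ring
  exact hmain.congr' heq.symm
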